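/- For all integers n ≥ 1 and k ≥ 2, it holds that ∫₀^{2/k} (1 − t + t·2^{−1/n})^{n·k} dt ≥ 1/k. -/

import Mathlib

open MeasureTheory intervalIntegral

/-- The integral bound (eq:int-app) in the proof of Lemma 4.1 (Case 1):
`∫₀^{2/k} (1 − t + t·2^{−1/n})^{n·k} dt ≥ 1/k` for all integers `n ≥ 1`, `k ≥ 2`. -/
theorem stmt5 (n k : ℕ) (hn : 1 ≤ n) (hk : 2 ≤ k) :
    (1:ℝ) / k ≤ ∫ t in (0:ℝ)..(2 / (k:ℝ)), (1 - t + t * (2:ℝ) ^ (-(1 / (n:ℝ)))) ^ (n * k) := by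
  have hk0 : (0:ℝ) < k := by exact_mod_cast Nat.lt_of_lt_of_le Nat.zero_lt_two hk
  have hn0 : (0:ℝ) < n := by exact_mod_cast hn
  set c : ℝ := (2:ℝ) ^ (-(1 / (n:ℝ))) with hc
  have hc0 : 0 < c := Real.rpow_pos_of_pos two_pos _
  have hc1 : c ≤ 1 := Real.rpow_le_one_of_one_le_of_nonpos (by norm_num)
    (neg_nonpos.mpr (by positivity))
  set L : ℝ := Real.log 2 with hL
  have hLpos : 0 < L := Real.log_pos (by norm_num)
  have hlogc : Real.log c = -(1 / (n:ℝ)) * L := Real.log_rpow two_pos _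
  have h2k1 : 2 / (k:ℝ) ≤ 1 := by
    rw [div_le_one hk0]; exact_mod_cast hk
  -- pointwise bound
  have key : ∀ t ∈ Set.Icc (0:ℝ) (2 / (k:ℝ)),
      (1/2) * (1 + (1 - t * k) * L) ≤ (1 - t + t * c) ^ (n * k) := by
    intro t ht
    obtain ⟨ht0, ht2⟩ := ht
    have ht1 : t ≤ 1 := ht2.trans h2k1
    have hpos : 0 < 1 - t + t * c := by nlinarith
    -- concavity of log
    have hconc : t * Real.log c ≤ Real.log (1 - t + t * c) := by
      have h := (strictConcaveOn_log_Ioi.concaveOn).2 (Set.mem_Ioi.mpr one_pos)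
        (Set.mem_Ioi.mpr hc0) (sub_nonneg.mpr ht1) ht0 (by ring)
      simpa [smul_eq_mul, Real.log_one] using h
    have hbase : Real.exp (t * Real.log c) ≤ 1 - t + t * c := by
      calc Real.exp (t * Real.log c) ≤ Real.exp (Real.log (1 - t + t * c)) :=
            Real.exp_le_exp.mpr hconc
        _ = 1 - t + t * c := Real.exp_log hpos
    have step1 : Real.exp (-(t * k) * L) ≤ (1 - t + t * c) ^ (n * k) := by
      have heq : Real.exp (-(t * k) * L) = Real.exp (t * Real.log c) ^ (n * k) := by
        rw [← Real.exp_nat_mul, hlogc]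
        congr 1
        field_simp
        push_cast
        ring
      rw [heq]
      exact pow_le_pow_left₀ (Real.exp_nonneg _) hbase _
    have step2 : (1/2) * (1 + (1 - t * k) * L) ≤ Real.exp (-(t * k) * L) := by
      have h2 : Real.exp (-L) = 1/2 := by
        rw [Real.exp_neg, hL, Real.exp_log two_pos]; norm_num
      have heq : Real.exp (-(t * k) * L) = (1/2) * Real.exp ((1 - t * k) * L) := by
        rw [← h2, ← Real.exp_add]; ring_nf
      rw [heq]
      have hb := Real.add_one_le_exp ((1 - t * k) * L)
      nlinarith [hb]
    exact step2.trans step1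
  have hab : (0:ℝ) ≤ 2 / (k:ℝ) := by positivity
  have hint1 : IntervalIntegrable (fun t => (1 - t + t * c) ^ (n * k)) volume 0 (2 / (k:ℝ)) :=
    (by continuity : Continuous fun t : ℝ => (1 - t + t * c) ^ (n * k)).intervalIntegrable _ _
  have hint2 : IntervalIntegrable (fun t => (1/2) * (1 + (1 - t * k) * L)) volume 0 (2 / (k:ℝ)) :=
    (by continuity : Continuous fun t : ℝ => (1/2) * (1 + (1 - t * (k:ℝ)) * L)).intervalIntegrable _ _
  have hmono := integral_mono_on hab hint2 hint1 key
  have hcalc : ∫ t in (0:ℝ)..(2 / (k:ℝ)), (1/2) * (1 + (1 - t * k) * L) = 1 / k := by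
    have hrw : (fun t : ℝ => (1/2) * (1 + (1 - t * (k:ℝ)) * L))
        = fun t : ℝ => (1/2 + L/2) + (-(L * k / 2)) * t := by
      funext t; ring
    rw [hrw]
    rw [integral_add (intervalIntegrable_const)
      (intervalIntegrable_id.const_mul _),
      intervalIntegral.integral_const, intervalIntegral.integral_const_mul,
      integral_id]
    field_simp
    linear_combination (4 + 4 * L) * mul_inv_cancel₀ hk0.ne'
  calc (1:ℝ) / k = ∫ t in (0:ℝ)..(2 / (k:ℝ)), (1/2) * (1 + (1 - t * k) * L) := hcalc.symm
    _ ≤ _ := hmono
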